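/- Let g be the morphism g(0)=103230, g(1)=1030, g(2)=12 from {0,1,2}* to {0,1,2,3}*. If w is an infinite word over {0,1,2,3} that is a Dean word and avoids all six factors 101, 123, 212, 232, 303, 321, then w = u·g(v) for some finite word u with |u| ≤ 5 and some infinite square-free word v over {0,1,2}. -/

import Mathlib

def SqFree {α : Type*} (w : List α) : Prop :=
  ∀ v : List α, v ≠ [] → ¬ (v ++ v) <:+: w

def Reduced (w : List (Fin 4)) : Prop :=
  ∀ p ∈ ([[0,2],[2,0],[1,3],[3,1]] : List (List (Fin 4))), ¬ p <:+: w

def DeanWord (w : List (Fin 4)) : Prop := Reduced w ∧ SqFree w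

def IFactor {α : Type*} (v : List α) (w : ℕ → α) : Prop :=
  ∃ i, v = (List.range v.length).map fun k => w (i + k)

def ISqFree {α : Type*} (w : ℕ → α) : Prop :=
  ∀ v : List α, v ≠ [] → ¬ IFactor (v ++ v) w

def IReduced (w : ℕ → Fin 4) : Prop :=
  ∀ p ∈ ([[0,2],[2,0],[1,3],[3,1]] : List (List (Fin 4))), ¬ IFactor p w

def IDean (w : ℕ → Fin 4) : Prop := IReduced w ∧ ISqFree w

def S1 : List (List (Fin 4)) := [[1,0,1],[1,2,3],[2,1,2],[2,3,2],[3,0,3],[3,2,1]]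

def g : Fin 3 → List (Fin 4) := ![[1,0,3,2,3,0],[1,0,3,0],[1,2]]

/-- The `g`-image of an infinite word: each letter image has length `≥ 2`, so the
`g`-image of the first `m + 1` letters has length `> m` and determines letter `m`. -/
def gInf (v : ℕ → Fin 3) : ℕ → Fin 4 :=
  fun m => (((List.range (m + 1)).map v).flatMap g).getD m 0

/-- The infinite word `u · x` for a finite word `u` and an infinite word `x`. -/
def wappend (u : List (Fin 4)) (x : ℕ → Fin 4) : ℕ → Fin 4 :=
  fun n => if n < u.length then u.getD n 0 else x (n - u.length)

/- ------------------ auxiliary material ------------------- -/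

def forb2 : List (List (Fin 4)) := [[0,2],[2,0],[1,3],[3,1]]

def T (a b c : Fin 4) : Prop :=
  a ≠ b ∧ b ≠ c ∧ [a,b] ∉ forb2 ∧ [b,c] ∉ forb2 ∧ [a,b,c] ∉ S1

instance (a b c : Fin 4) : Decidable (T a b c) := by unfold T; infer_instance

lemma Tforce : ∀ a b c : Fin 4, T a b c →
    ((a = 1 → b = 0 ∨ b = 2) ∧ (a = 1 ∧ b = 0 → c = 3) ∧ (a = 1 ∧ b = 2 → c = 1) ∧
     (a = 0 ∧ b = 3 → c = 0 ∨ c = 2) ∧ (a = 3 ∧ b = 0 → c = 1) ∧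
     (a = 3 ∧ b = 2 → c = 3) ∧ (a = 2 ∧ b = 3 → c = 0)) := by decide

lemma first1aux : ∀ a b c d e f : Fin 4, T a b c → T b c d → T c d e → T d e f →
    a = 1 ∨ b = 1 ∨ c = 1 ∨ d = 1 ∨ e = 1 ∨ f = 1 := by decide

lemma hT_main {w : ℕ → Fin 4} (hw : IDean w) (havoid : ∀ p ∈ S1, ¬ IFactor p w) :
    ∀ i j k : ℕ, j = i + 1 → k = i + 2 → T (w i) (w j) (w k) := by
  rintro i _ _ rfl rfl
  refine ⟨?_, ?_, ?_, ?_, ?_⟩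
  · intro h
    exact hw.2 [w i] (by simp) ⟨i, by simp [List.range_succ]; exact h⟩
  · intro h
    refine hw.2 [w (i+1)] (by simp) ⟨i+1, ?_⟩
    simp [List.range_succ]
    exact h
  · intro h
    exact hw.1 _ h ⟨i, by simp [List.range_succ]⟩
  · intro h
    refine hw.1 _ h ⟨i+1, ?_⟩
    simp [List.range_succ]
  · intro h
    exact havoid _ h ⟨i, by simp [List.range_succ]⟩

lemma blockL {w : ℕ → Fin 4} (hw : IDean w) (havoid : ∀ p ∈ S1, ¬ IFactor p w)
    (m : ℕ) (hm : w m = 1) :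
    ∃ c : Fin 3, (∀ j < (g c).length, w (m + j) = (g c).getD j 0) ∧
      w (m + (g c).length) = 1 := by
  have hT := hT_main hw havoid
  have t0 := hT m (m+1) (m+2) rfl rfl
  have t1 := hT (m+1) (m+2) (m+3) (by omega) (by omega)
  have t2 := hT (m+2) (m+3) (m+4) (by omega) (by omega)
  have t3 := hT (m+3) (m+4) (m+5) (by omega) (by omega)
  have t4 := hT (m+4) (m+5) (m+6) (by omega) (by omega)
  rw [hm] at t0
  rcases (Tforce _ _ _ t0).1 rfl with hb | hb
  · -- w (m+1) = 0
    have h2 : w (m+2) = 3 := (Tforce _ _ _ t0).2.1 ⟨rfl, hb⟩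
    rw [hb, h2] at t1
    rcases (Tforce _ _ _ t1).2.2.2.1 ⟨rfl, rfl⟩ with h3 | h3
    · -- block 1030
      rw [h2, h3] at t2
      have h4 : w (m+4) = 1 := (Tforce _ _ _ t2).2.2.2.2.1 ⟨rfl, rfl⟩
      refine ⟨1, ?_, by simpa [g] using h4⟩
      intro j hj
      simp only [g] at hj ⊢
      norm_num at hj ⊢
      interval_cases j <;> simp_all
    · -- block 103230
      rw [h2, h3] at t2
      have h4 : w (m+4) = 3 := (Tforce _ _ _ t2).2.2.2.2.2.1 ⟨rfl, rfl⟩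
      rw [h3, h4] at t3
      have h5 : w (m+5) = 0 := (Tforce _ _ _ t3).2.2.2.2.2.2 ⟨rfl, rfl⟩
      rw [h4, h5] at t4
      have h6 : w (m+6) = 1 := (Tforce _ _ _ t4).2.2.2.2.1 ⟨rfl, rfl⟩
      refine ⟨0, ?_, by simpa [g] using h6⟩
      intro j hj
      simp only [g] at hj ⊢
      norm_num at hj ⊢
      interval_cases j <;> simp_all
  · -- w (m+1) = 2, block 12
    have h2 : w (m+2) = 1 := (Tforce _ _ _ t0).2.2.1 ⟨rfl, hb⟩
    refine ⟨2, ?_, by simpa [g] using h2⟩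
    intro j hj
    simp only [g] at hj ⊢
    norm_num at hj ⊢
    change j < 2 at hj
    change w (m + j) = ([1, 2] : List (Fin 4))[j]?.getD 0
    interval_cases j <;> simp_all

/-- the `g`-image of the first `k` letters of `v` -/
def Bv (v : ℕ → Fin 3) (k : ℕ) : List (Fin 4) := ((List.range k).map v).flatMap g

lemma Bv_succ (v : ℕ → Fin 3) (k : ℕ) : Bv v (k+1) = Bv v k ++ g (v k) := by
  simp [Bv, List.range_succ]

lemma g_len (c : Fin 3) : 2 ≤ (g c).length := by fin_cases c <;> simp [g]

lemma g_ne_nil (c : Fin 3) : g c ≠ [] := by fin_cases c <;> simp [g]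

lemma Bv_len (v : ℕ → Fin 3) (k : ℕ) : 2 * k ≤ (Bv v k).length := by
  induction k with
  | zero => simp
  | succ k ih =>
    rw [Bv_succ]
    have := g_len (v k)
    simp only [List.length_append]
    omega

theorem stmt14 (w : ℕ → Fin 4) (hw : IDean w) (havoid : ∀ p ∈ S1, ¬ IFactor p w) :
    ∃ (u : List (Fin 4)) (v : ℕ → Fin 3),
      u.length ≤ 5 ∧ ISqFree v ∧ w = wappend u (gInf v) := by
  have hT := hT_main hw havoid
  -- a 1 occurs among the first six letters
  have h1 : ∃ i, i ≤ 5 ∧ w i = 1 := by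
    have t0 := hT 0 1 2 rfl rfl
    have t1 := hT 1 2 3 rfl rfl
    have t2 := hT 2 3 4 rfl rfl
    have t3 := hT 3 4 5 rfl rfl
    rcases first1aux _ _ _ _ _ _ t0 t1 t2 t3 with h|h|h|h|h|h
    exacts [⟨0, by omega, h⟩, ⟨1, by omega, h⟩, ⟨2, by omega, h⟩,
            ⟨3, by omega, h⟩, ⟨4, by omega, h⟩, ⟨5, by omega, h⟩]
  obtain ⟨i₀, hi₀5, hi₀⟩ := h1
  choose C hC1 hC2 using blockL hw havoid
  let f : ℕ → {m : ℕ // w m = 1} := fun k =>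
    Nat.rec ⟨i₀, hi₀⟩ (fun _ p => ⟨p.1 + (g (C p.1 p.2)).length, hC2 p.1 p.2⟩) k
  let v : ℕ → Fin 3 := fun k => C (f k).1 (f k).2
  have hf0 : (f 0).1 = i₀ := rfl
  have hfs : ∀ k, (f (k+1)).1 = (f k).1 + (g (v k)).length := fun k => rfl
  have hA : ∀ k, (f k).1 = i₀ + (Bv v k).length := by
    intro k; induction k with
    | zero => simp [hf0, Bv]
    | succ k ih =>
      rw [hfs, Bv_succ, ih, List.length_append]
      omega
  have hB : ∀ k m, m < (Bv v k).length → (Bv v k).getD m 0 = w (i₀ + m) := by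
    intro k; induction k with
    | zero => intro m hm; simp [Bv] at hm
    | succ k ih =>
      intro m hm
      rw [Bv_succ] at hm ⊢
      rcases Nat.lt_or_ge m (Bv v k).length with h | h
      · rw [List.getD_append _ _ _ _ h]
        exact ih m h
      · rw [List.getD_append_right _ _ _ _ h]
        have hj : m - (Bv v k).length < (g (v k)).length := by
          simp only [List.length_append] at hm; omega
        have key := hC1 (f k).1 (f k).2 (m - (Bv v k).length) hj
        have e : i₀ + m = (f k).1 + (m - (Bv v k).length) := by rw [hA k]; omega
        rw [e]
        exact key.symm
  refine ⟨(List.range i₀).map w, v, by simpa using hi₀5, ?_, ?_⟩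
  · -- ISqFree v
    rintro t ht ⟨i, hfac⟩
    set L := t.length with hL
    have hlen : (t ++ t).length = L + L := by simp [hL]
    rw [hlen] at hfac
    -- hfac : t ++ t = (range (L+L)).map (fun k => v (i+k))
    apply hw.2 (t.flatMap g)
    · intro hnil
      rcases t with _ | ⟨c, t'⟩
      · exact ht rfl
      · have : g c ++ t'.flatMap g = [] := hnil
        exact g_ne_nil c (List.append_eq_nil_iff.mp this).1
    refine ⟨i₀ + (Bv v i).length, ?_⟩
    have key : Bv v (i + (L + L)) = Bv v i ++ (t.flatMap g ++ t.flatMap g) := by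
      have e1 : List.map v (List.map (fun x => i + x) (List.range (L + L))) = t ++ t := by
        rw [List.map_map]; exact hfac.symm
      unfold Bv
      rw [List.range_add, List.map_append, e1]
      simp only [List.flatMap_append]
    have hlen2 : ((t.flatMap g) ++ (t.flatMap g)).length
        ≤ (Bv v (i + (L+L))).length - (Bv v i).length := by
      rw [key]; simp
    apply List.ext_getElem (by simp)
    intro k hk1 hk2
    have hkN : k < (t.flatMap g ++ t.flatMap g).length := hk1
    have hklt : (Bv v i).length + k < (Bv v (i + (L+L))).length := by
      rw [key, List.length_append]; omega
    have e1 := hB (i + (L+L)) ((Bv v i).length + k) hklt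
    rw [key, List.getD_append_right _ _ _ _ (by omega)] at e1
    have e2 : ((t.flatMap g ++ t.flatMap g)).getD ((Bv v i).length + k - (Bv v i).length) 0
        = (t.flatMap g ++ t.flatMap g).getD k 0 := by congr 1; omega
    rw [e2] at e1
    rw [List.getD_eq_getElem _ _ hkN] at e1
    rw [e1]
    simp only [List.getElem_map, List.getElem_range]
    congr 1
    omega
  · -- w = wappend u (gInf v)
    funext n
    by_cases hn : n < i₀
    · simp only [wappend, List.length_map, List.length_range, if_pos hn]
      rw [List.getD_eq_getElem _ _ (by simpa using hn)]
      simp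
    · simp only [wappend, List.length_map, List.length_range, if_neg hn]
      have hmlt : n - i₀ < (Bv v (n - i₀ + 1)).length :=
        lt_of_lt_of_le (by omega) (Bv_len v (n - i₀ + 1))
      have := hB (n - i₀ + 1) (n - i₀) hmlt
      have e : gInf v (n - i₀) = (Bv v (n - i₀ + 1)).getD (n - i₀) 0 := rfl
      rw [e, this]
      congr 1
      omega
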